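/- Let G = (V, E) be a graph with no isolated vertices and w : E → ℝ with w_e ≠ 0 for all e ∈ E. Suppose there exist y ∈ ℝ^V and S ∈ ℝ^{V×V} positive semidefinite with rank(S) ≤ 1 such that S = Diag(y) − (1/4)·L_G(w), where L_G(w) = Σ_{ij ∈ E} w_{ij} (e_i − e_j)(e_i − e_j)ᵀ is the weighted Laplacian. Then G is the complete graph on V, and there exists u : V → ℝ with u_i ≠ 0 for all i such that w_{ij} = u_i u_j for every edge ij. -/

import Mathlib

open Matrix

theorem stmt_8 (V : Type*) [Fintype V] [DecidableEq V] (G : SimpleGraph V)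
    (hnoiso : ∀ i : V, ∃ j, G.Adj i j)
    (w : V → V → ℝ) (hwsymm : ∀ i j, w i j = w j i)
    (hw0 : ∀ i j, ¬ G.Adj i j → w i j = 0)
    (hwne : ∀ i j, G.Adj i j → w i j ≠ 0)
    (y : V → ℝ) (S : Matrix V V ℝ)
    (hpsd : S.PosSemidef) (hrank : S.rank ≤ 1)
    (hS : S = Matrix.diagonal y -
      (1/4 : ℝ) • (Matrix.of fun i j =>
        if i = j then ∑ k, w i k else -(w i j))) :
    (∀ i j : V, i ≠ j → G.Adj i j) ∧
      ∃ u : V → ℝ, (∀ i, u i ≠ 0) ∧ ∀ i j, G.Adj i j → w i j = u i * u j := by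
  -- trivial case: empty vertex set
  cases isEmpty_or_nonempty V with
  | inl h =>
    exact ⟨fun i => (IsEmpty.false i).elim, fun _ => 1, fun i => (IsEmpty.false i).elim,
      fun i => (IsEmpty.false i).elim⟩
  | inr h =>
  -- off-diagonal entries of S
  have hoff : ∀ i j : V, i ≠ j → S i j = w i j / 4 := by
    intro i j hij
    rw [hS]
    simp [Matrix.sub_apply, Matrix.diagonal_apply_ne _ hij, hij]
    ring
  -- symmetry of S
  have hsym : ∀ i j : V, S i j = S j i := by
    intro i j
    have := hpsd.isHermitian
    have h2 : S.conjTranspose = S := this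
    have := congrFun (congrFun h2 i) j
    simpa [Matrix.conjTranspose_apply] using this.symm
  -- rank-one factorization : S i j = c j * v i
  obtain ⟨v₀, hv₀⟩ := finrank_le_one_iff.mp hrank
  have hfac : ∃ v c : V → ℝ, ∀ i j, S i j = c j * v i := by
    have hcol : ∀ j : V, ∃ r : ℝ, ∀ i, S i j = r * (v₀ : V → ℝ) i := by
      intro j
      have hmem : S *ᵥ Pi.single j 1 ∈ LinearMap.range S.mulVecLin :=
        ⟨Pi.single j 1, by simp [Matrix.mulVecLin_apply]⟩
      obtain ⟨r, hr⟩ := hv₀ ⟨_, hmem⟩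
      refine ⟨r, fun i => ?_⟩
      have := congrFun (congrArg (Subtype.val) hr) i
      have hcolval : (S *ᵥ Pi.single j 1) i = S i j := by
        simp [Matrix.mulVec, dotProduct, Pi.single_apply]
      rw [← hcolval]
      simpa using this.symm
    choose c hc using hcol
    exact ⟨(v₀ : V → ℝ), c, fun i j => hc j i⟩
  obtain ⟨v, c, hvc⟩ := hfac
  -- every vertex has a neighbor, so every S i j with that neighbor is nonzero
  have hSne : ∀ i : V, ∃ j, S i j ≠ 0 := by
    intro i
    obtain ⟨j, hj⟩ := hnoiso i
    refine ⟨j, ?_⟩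
    rw [hoff i j hj.ne]
    exact div_ne_zero (hwne i j hj) (by norm_num)
  have hvne : ∀ i, v i ≠ 0 := by
    intro i
    obtain ⟨j, hj⟩ := hSne i
    rw [hvc] at hj
    exact right_ne_zero_of_mul hj
  have hsymvc : ∀ i j, c j * v i = c i * v j := by
    intro i j
    rw [← hvc, ← hvc]; exact hsym i j
  have hcne : ∀ i, c i ≠ 0 := by
    intro i
    obtain ⟨j, hj⟩ := hSne i
    rw [hvc] at hj
    have hcj : c j ≠ 0 := left_ne_zero_of_mul hj
    intro hci
    have := hsymvc i j
    rw [hci, zero_mul] at this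
    exact hj this
  have hSall : ∀ i j, S i j ≠ 0 := fun i j => by
    rw [hvc]; exact mul_ne_zero (hcne j) (hvne i)
  -- completeness
  have hcomplete : ∀ i j : V, i ≠ j → G.Adj i j := by
    intro i j hij
    by_contra hadj
    have := hoff i j hij
    rw [hw0 i j hadj] at this
    exact hSall i j (by rw [this]; norm_num)
  refine ⟨hcomplete, ?_⟩
  -- construct u
  obtain ⟨i₀⟩ := h
  set d : ℝ := S i₀ i₀ with hd
  have hd0 : 0 < d := by
    have hnn : 0 ≤ d := by
      have := hpsd.dotProduct_mulVec_nonneg (Pi.single i₀ 1)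
      simpa [dotProduct, Matrix.mulVec, Pi.single_apply, hd] using this
    exact lt_of_le_of_ne hnn (Ne.symm (hSall i₀ i₀))
  have hsd : Real.sqrt d ≠ 0 := ne_of_gt (Real.sqrt_pos.mpr hd0)
  refine ⟨fun i => 2 * S i i₀ / Real.sqrt d, fun i => ?_, ?_⟩
  · exact div_ne_zero (mul_ne_zero two_ne_zero (hSall i i₀)) hsd
  · intro i j hadj
    have hij : i ≠ j := hadj.ne
    have hminor : S i i₀ * S j i₀ = S i j * d := by
      rw [hvc i i₀, hvc j i₀, hvc i j, hd, hvc i₀ i₀]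
      have h2 : c i₀ * v j = c j * v i₀ := hsymvc j i₀
      linear_combination (c i₀ * v i) * h2
    have hsq : Real.sqrt d * Real.sqrt d = d := Real.mul_self_sqrt hd0.le
    have : w i j = 4 * S i j := by rw [hoff i j hij]; ring
    rw [this]
    field_simp
    rw [Real.sq_sqrt hd0.le]; linarith [hminor]
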